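/- Let α ∈ (0,1), let Ω ⊂ ℝ^N be measurable, and let v, w ∈ L^{α+1}(Ω). Then ∫_Ω |v - w|^{α+1} dx ≤ c(α) · (∫_Ω |v|^{α+1} + |w|^{α+1} dx)^{(1-α)/2} · (∫_Ω (|v|^{α-1}v - |w|^{α-1}w)(v - w) dx)^{(α+1)/2}. -/

import Mathlib

open MeasureTheory
open scoped ENNReal NNReal

private lemma rpow_sub_one_mul {m : ℝ} (hm : 0 ≤ m) {β : ℝ} (hβ : β ≠ 0) :
    m ^ (β - 1) * m = m ^ β := by
  rcases eq_or_lt_of_le hm with h | h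
  · simp [← h, Real.zero_rpow hβ]
  · have : m ^ (β - 1) * m = m ^ (β - 1 + 1) := by
      rw [Real.rpow_add h, Real.rpow_one]
    rw [this, sub_add_cancel]

private lemma real_rpow_add_le {a b p : ℝ} (ha : 0 ≤ a) (hb : 0 ≤ b) (hp0 : 0 ≤ p)
    (hp1 : p ≤ 1) : (a + b) ^ p ≤ a ^ p + b ^ p := by
  have h := NNReal.rpow_add_le_add_rpow a.toNNReal b.toNNReal hp0 hp1
  have h2 := NNReal.coe_le_coe.2 h
  push_cast at h2
  rwa [Real.coe_toNNReal _ ha, Real.coe_toNNReal _ hb] at h2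

/-- Core monotonicity estimate for `b ≤ a`, `-b ≤ a`. -/
private lemma keyA_core {α : ℝ} (hα0 : 0 < α) (hα1 : α < 1) {a b : ℝ}
    (h1 : b ≤ a) (h2 : -b ≤ a) :
    α / 2 * ((a - b) ^ 2 * (|a| + |b|) ^ (α - 1)) ≤
      (|a| ^ (α - 1) * a - |b| ^ (α - 1) * b) * (a - b) := by
  have ha : 0 ≤ a := by linarith
  have haa : |a| = a := abs_of_nonneg ha
  have hαne : α ≠ 0 := ne_of_gt hα0
  rcases le_total b 0 with hb | hb
  · -- b ≤ 0
    set m := -b with hm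
    have hm0 : 0 ≤ m := by linarith
    have habs : |b| = m := abs_of_nonpos hb
    have hφb : |b| ^ (α - 1) * b = -(m ^ α) := by
      rw [habs, show b = -m by rw [hm]; ring, mul_neg, rpow_sub_one_mul hm0 hαne]
    rw [haa, hφb, habs, rpow_sub_one_mul ha hαne]
    have hab : a - b = a + m := by rw [hm]; ring
    rw [hab, sub_neg_eq_add]
    rcases eq_or_lt_of_le (by linarith : (0:ℝ) ≤ a + m) with hs | hs
    · rw [← hs]
      simp
    · have e1 : (a + m) ^ 2 * (a + m) ^ (α - 1) = (a + m) ^ α * (a + m) := by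
        rw [sq, mul_assoc, mul_comm (a+m) ((a+m)^(α-1)), rpow_sub_one_mul (le_of_lt hs) hαne,
          mul_comm]
      rw [e1]
      have hsub : (a + m) ^ α ≤ a ^ α + m ^ α := real_rpow_add_le ha hm0 hα0.le hα1.le
      have : α / 2 * (a + m) ^ α ≤ a ^ α + m ^ α := by
        have hpos : 0 ≤ (a + m) ^ α := Real.rpow_nonneg (by linarith) _
        nlinarith
      calc α / 2 * ((a + m) ^ α * (a + m)) = (α / 2 * (a + m) ^ α) * (a + m) := by ring
        _ ≤ (a ^ α + m ^ α) * (a + m) := by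
            apply mul_le_mul_of_nonneg_right this (by linarith)
  · -- 0 ≤ b ≤ a
    have hbb : |b| = b := abs_of_nonneg hb
    rw [haa, hbb, rpow_sub_one_mul ha hαne, rpow_sub_one_mul hb hαne]
    rcases eq_or_lt_of_le ha with h0 | h0
    · have hb0 : b = 0 := le_antisymm (by linarith) hb
      rw [← h0, hb0]
      simp
    · -- a > 0
      have step1 : (a + b) ^ (α - 1) ≤ a ^ (α - 1) :=
        Real.rpow_le_rpow_of_nonpos h0 (by linarith) (by linarith)
      have step2 : α * (a ^ (α - 1) * (a - b)) ≤ a ^ α - b ^ α := by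
        have ht : -1 ≤ b / a - 1 := by
          have : 0 ≤ b / a := div_nonneg hb ha
          linarith
        have hB := rpow_one_add_le_one_add_mul_self ht hα0.le hα1.le
        rw [show (1:ℝ) + (b / a - 1) = b / a by ring] at hB
        have hmul := mul_le_mul_of_nonneg_right hB (Real.rpow_nonneg ha α)
        have hba : (b / a) ^ α * a ^ α = b ^ α := by
          rw [← Real.mul_rpow (div_nonneg hb ha) ha, div_mul_cancel₀ _ (ne_of_gt h0)]
        rw [hba] at hmul
        have haa' : a ^ α = a ^ (α - 1) * a := (rpow_sub_one_mul ha hαne).symm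
        have key : (1 + α * (b / a - 1)) * a ^ α = a ^ α - α * (a ^ (α - 1) * (a - b)) := by
          rw [haa']
          field_simp
          ring
        rw [key] at hmul
        linarith
      have hnn1 : 0 ≤ a ^ (α - 1) := Real.rpow_nonneg ha _
      have hnn2 : (0:ℝ) ≤ (a - b) ^ 2 := sq_nonneg _
      have h3 := mul_le_mul_of_nonneg_right step2 (sub_nonneg.2 h1)
      have h4 := mul_le_mul_of_nonneg_left step1 hnn2
      nlinarith [mul_nonneg hnn1 hnn2, mul_nonneg hnn2 (Real.rpow_nonneg (by linarith : (0:ℝ) ≤ a + b) (α - 1))]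

private lemma keyA {α : ℝ} (hα0 : 0 < α) (hα1 : α < 1) (a b : ℝ) :
    α / 2 * ((a - b) ^ 2 * (|a| + |b|) ^ (α - 1)) ≤
      (|a| ^ (α - 1) * a - |b| ^ (α - 1) * b) * (a - b) := by
  rcases le_total b a with h | h
  · rcases le_total (-b) a with h' | h'
    · exact keyA_core hα0 hα1 h h'
    · have := keyA_core hα0 hα1 (show -a ≤ -b by linarith) (show -(-a) ≤ -b by linarith)
      simp only [abs_neg] at this
      calc α / 2 * ((a - b) ^ 2 * (|a| + |b|) ^ (α - 1))
          = α / 2 * ((-b - -a) ^ 2 * (|b| + |a|) ^ (α - 1)) := by ring_nf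
        _ ≤ (|b| ^ (α - 1) * -b - |a| ^ (α - 1) * -a) * (-b - -a) := this
        _ = (|a| ^ (α - 1) * a - |b| ^ (α - 1) * b) * (a - b) := by ring
  · rcases le_total (-a) b with h' | h'
    · have := keyA_core hα0 hα1 h (show -a ≤ b from h')
      calc α / 2 * ((a - b) ^ 2 * (|a| + |b|) ^ (α - 1))
          = α / 2 * ((b - a) ^ 2 * (|b| + |a|) ^ (α - 1)) := by ring_nf
        _ ≤ (|b| ^ (α - 1) * b - |a| ^ (α - 1) * a) * (b - a) := this
        _ = (|a| ^ (α - 1) * a - |b| ^ (α - 1) * b) * (a - b) := by ring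
    · have := keyA_core hα0 hα1 (show -b ≤ -a by linarith) (show -(-b) ≤ -a by linarith)
      simp only [abs_neg] at this
      calc α / 2 * ((a - b) ^ 2 * (|a| + |b|) ^ (α - 1))
          = α / 2 * ((-a - -b) ^ 2 * (|a| + |b|) ^ (α - 1)) := by ring_nf
        _ ≤ (|a| ^ (α - 1) * -a - |b| ^ (α - 1) * -b) * (-a - -b) := this
        _ = (|a| ^ (α - 1) * a - |b| ^ (α - 1) * b) * (a - b) := by ring

private lemma keyB {α : ℝ} (hα0 : 0 < α) (hα1 : α < 1) (a b : ℝ) :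
    |a - b| ^ (α + 1) ≤ ((a - b) ^ 2 * (|a| + |b|) ^ (α - 1)) ^ ((α + 1) / 2) *
      ((|a| + |b|) ^ (α + 1)) ^ ((1 - α) / 2) := by
  have hs0 : (0:ℝ) ≤ |a| + |b| := by positivity
  by_cases hab : a = b
  · subst hab
    rw [sub_self, abs_zero, Real.zero_rpow (by linarith)]
    exact mul_nonneg (Real.rpow_nonneg (mul_nonneg (sq_nonneg _) (Real.rpow_nonneg hs0 _)) _)
      (Real.rpow_nonneg (Real.rpow_nonneg hs0 _) _)
  · have hs : (0:ℝ) < |a| + |b| := by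
      rcases eq_or_lt_of_le hs0 with h | h
      · exfalso
        have ha0 : |a| = 0 := by
          have := abs_nonneg a; have := abs_nonneg b; linarith
        have hb0 : |b| = 0 := by
          have := abs_nonneg a; have := abs_nonneg b; linarith
        exact hab (by rw [abs_eq_zero] at ha0 hb0; rw [ha0, hb0])
      · exact h
    have e1 : ((a - b) ^ 2 : ℝ) ^ ((α + 1) / 2) = |a - b| ^ (α + 1) := by
      rw [← sq_abs, ← Real.rpow_natCast |a - b| 2, ← Real.rpow_mul (abs_nonneg _)]
      norm_num
      rw [show (2:ℝ) * ((α + 1) / 2) = α + 1 by ring]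
    have e2 : ((|a| + |b|) ^ (α - 1)) ^ ((α + 1) / 2) *
        ((|a| + |b|) ^ (α + 1)) ^ ((1 - α) / 2) = 1 := by
      rw [← Real.rpow_mul hs0, ← Real.rpow_mul hs0, ← Real.rpow_add hs,
        show (α - 1) * ((α + 1) / 2) + (α + 1) * ((1 - α) / 2) = 0 by ring, Real.rpow_zero]
    calc |a - b| ^ (α + 1)
        = ((a - b) ^ 2) ^ ((α + 1) / 2) *
            (((|a| + |b|) ^ (α - 1)) ^ ((α + 1) / 2) *
              ((|a| + |b|) ^ (α + 1)) ^ ((1 - α) / 2)) := by rw [e2, mul_one, e1]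
      _ ≤ ((a - b) ^ 2 * (|a| + |b|) ^ (α - 1)) ^ ((α + 1) / 2) *
            ((|a| + |b|) ^ (α + 1)) ^ ((1 - α) / 2) := by
          rw [Real.mul_rpow (sq_nonneg _) (Real.rpow_nonneg hs0 _)]
          apply le_of_eq
          ring

private lemma keyC {α : ℝ} (hα0 : 0 < α) (a b : ℝ) :
    (|a| + |b|) ^ (α + 1) ≤ 2 ^ (α + 1) * (|a| ^ (α + 1) + |b| ^ (α + 1)) := by
  have h2 : (0:ℝ) ≤ 2 ^ (α + 1) := Real.rpow_nonneg (by norm_num) _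
  rcases le_total |a| |b| with h | h
  · calc (|a| + |b|) ^ (α + 1) ≤ (2 * |b|) ^ (α + 1) :=
          Real.rpow_le_rpow (by positivity) (by linarith) (by linarith)
      _ = 2 ^ (α + 1) * |b| ^ (α + 1) := Real.mul_rpow (by norm_num) (abs_nonneg _)
      _ ≤ 2 ^ (α + 1) * (|a| ^ (α + 1) + |b| ^ (α + 1)) := by
          apply mul_le_mul_of_nonneg_left _ h2
          have := Real.rpow_nonneg (abs_nonneg a) (α + 1)
          linarith
  · calc (|a| + |b|) ^ (α + 1) ≤ (2 * |a|) ^ (α + 1) :=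
          Real.rpow_le_rpow (by positivity) (by linarith) (by linarith)
      _ = 2 ^ (α + 1) * |a| ^ (α + 1) := Real.mul_rpow (by norm_num) (abs_nonneg _)
      _ ≤ 2 ^ (α + 1) * (|a| ^ (α + 1) + |b| ^ (α + 1)) := by
          apply mul_le_mul_of_nonneg_left _ h2
          have := Real.rpow_nonneg (abs_nonneg b) (α + 1)
          linarith

private lemma key_pointwise {α : ℝ} (hα0 : 0 < α) (hα1 : α < 1) (a b : ℝ) :
    |a - b| ^ (α + 1) ≤ ((2 / α) ^ ((α + 1) / 2) * 2 ^ ((α + 1) * ((1 - α) / 2))) *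
      ((|a| ^ (α + 1) + |b| ^ (α + 1)) ^ ((1 - α) / 2) *
        ((|a| ^ (α - 1) * a - |b| ^ (α - 1) * b) * (a - b)) ^ ((α + 1) / 2)) := by
  set E := (a - b) ^ 2 * (|a| + |b|) ^ (α - 1) with hE
  set D := (|a| ^ (α - 1) * a - |b| ^ (α - 1) * b) * (a - b) with hD
  set M := |a| ^ (α + 1) + |b| ^ (α + 1) with hM
  have hs0 : (0:ℝ) ≤ |a| + |b| := by positivity
  have hE0 : 0 ≤ E := mul_nonneg (sq_nonneg _) (Real.rpow_nonneg hs0 _)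
  have hkey := keyA hα0 hα1 a b
  rw [← hE, ← hD] at hkey
  have hD0 : 0 ≤ D := le_trans (by positivity) hkey
  have hED : E ≤ (2 / α) * D := by
    have h1 := mul_le_mul_of_nonneg_left hkey (by positivity : (0:ℝ) ≤ 2 / α)
    have h2 : (2 / α) * (α / 2 * E) = E := by field_simp
    linarith
  have hM0 : 0 ≤ M := add_nonneg (Real.rpow_nonneg (abs_nonneg _) _)
    (Real.rpow_nonneg (abs_nonneg _) _)
  have hCle : (|a| + |b|) ^ (α + 1) ≤ 2 ^ (α + 1) * M := keyC hα0 a b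
  calc |a - b| ^ (α + 1)
      ≤ E ^ ((α + 1) / 2) * ((|a| + |b|) ^ (α + 1)) ^ ((1 - α) / 2) := keyB hα0 hα1 a b
    _ ≤ ((2 / α) * D) ^ ((α + 1) / 2) * (2 ^ (α + 1) * M) ^ ((1 - α) / 2) := by
        apply mul_le_mul
        · exact Real.rpow_le_rpow hE0 hED (by positivity)
        · exact Real.rpow_le_rpow (Real.rpow_nonneg hs0 _) hCle (by linarith)
        · exact Real.rpow_nonneg (Real.rpow_nonneg hs0 _) _
        · exact Real.rpow_nonneg (mul_nonneg (by positivity) hD0) _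
    _ = ((2 / α) ^ ((α + 1) / 2) * 2 ^ ((α + 1) * ((1 - α) / 2))) *
          (M ^ ((1 - α) / 2) * D ^ ((α + 1) / 2)) := by
        rw [Real.mul_rpow (by positivity : (0:ℝ) ≤ 2 / α) hD0,
          Real.mul_rpow (Real.rpow_nonneg (by norm_num) _) hM0,
          ← Real.rpow_mul (by norm_num : (0:ℝ) ≤ 2)]
        ring

private lemma abs_phi {α : ℝ} (hα0 : 0 < α) (t : ℝ) : |(|t| ^ (α - 1) * t)| = |t| ^ α := by
  rw [abs_mul, abs_of_nonneg (Real.rpow_nonneg (abs_nonneg t) _),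
    rpow_sub_one_mul (abs_nonneg t) (ne_of_gt hα0)]

private lemma rpow_succ_self {C α : ℝ} (hC : 0 ≤ C) (hα : α + 1 ≠ 0) :
    C ^ α * C = C ^ (α + 1) := by
  have := rpow_sub_one_mul hC hα
  rwa [add_sub_cancel_right] at this

private lemma cross_bound {α : ℝ} (hα0 : 0 < α) (hα1 : α < 1) {A B : ℝ} (hA : 0 ≤ A)
    (hB : 0 ≤ B) : A ^ α * B ≤ A ^ (α + 1) + B ^ (α + 1) := by
  have hne : α + 1 ≠ 0 := by linarith
  rcases le_total A B with h | h
  · have h1 : A ^ α * B ≤ B ^ α * B :=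
      mul_le_mul_of_nonneg_right (Real.rpow_le_rpow hA h hα0.le) hB
    rw [rpow_succ_self hB hne] at h1
    have := Real.rpow_nonneg hA (α + 1)
    linarith
  · have h1 : A ^ α * B ≤ A ^ α * A :=
      mul_le_mul_of_nonneg_left h (Real.rpow_nonneg hA α)
    rw [rpow_succ_self hA hne] at h1
    have := Real.rpow_nonneg hB (α + 1)
    linarith

private lemma memℒp_rpow_one_div {X : Type*} [MeasurableSpace X] {μ : Measure X} {g : X → ℝ}
    (hg : Integrable g μ) (hg0 : ∀ x, 0 ≤ g x) {r : ℝ} (hr : 1 < r) :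
    MemLp (fun x => g x ^ (1 / r)) (ENNReal.ofReal r) μ := by
  have hr0 : (0:ℝ) < r := by linarith
  have h0 : (0:ℝ) < 1 / r := by positivity
  have h := (memLp_norm_rpow_iff (p := 1) (q := ENNReal.ofReal (1 / r))
      hg.aestronglyMeasurable (by simp [ENNReal.ofReal_eq_zero]; linarith) ENNReal.ofReal_ne_top).mpr
      (memLp_one_iff_integrable.mpr hg)
  have e1 : (ENNReal.ofReal (1 / r)).toReal = 1 / r := ENNReal.toReal_ofReal h0.le
  have e2 : (1 : ℝ≥0∞) / ENNReal.ofReal (1 / r) = ENNReal.ofReal r := by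
    rw [one_div, one_div, ENNReal.ofReal_inv_of_pos hr0, inv_inv]
  rw [e1, e2] at h
  exact h.ae_eq (Filter.Eventually.of_forall fun x => by
    rw [Real.norm_eq_abs, abs_of_nonneg (hg0 x)])

theorem integral_alpha_inequality (α : ℝ) (hα0 : 0 < α) (hα1 : α < 1) :
    ∃ c : ℝ, 0 < c ∧ ∀ (N : ℕ) (Ω : Set (Fin N → ℝ)), MeasurableSet Ω →
      ∀ v w : (Fin N → ℝ) → ℝ,
        MemLp v (ENNReal.ofReal (α + 1)) (volume.restrict Ω) →
        MemLp w (ENNReal.ofReal (α + 1)) (volume.restrict Ω) →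
        (∫ x in Ω, |v x - w x| ^ (α + 1)) ≤
          c * (∫ x in Ω, (|v x| ^ (α + 1) + |w x| ^ (α + 1))) ^ ((1 - α) / 2) *
            (∫ x in Ω, ((|v x| ^ (α - 1) * v x) - (|w x| ^ (α - 1) * w x)) * (v x - w x))
              ^ ((α + 1) / 2) := by
  set C0 : ℝ := (2 / α) ^ ((α + 1) / 2) * 2 ^ ((α + 1) * ((1 - α) / 2)) with hC0
  have hC0pos : 0 < C0 := mul_pos (Real.rpow_pos_of_pos (by positivity) _)
    (Real.rpow_pos_of_pos (by norm_num) _)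
  refine ⟨C0, hC0pos, fun N Ω hΩ v w hv hw => ?_⟩
  set μ := volume.restrict Ω with hμ
  set M : (Fin N → ℝ) → ℝ := fun x => |v x| ^ (α + 1) + |w x| ^ (α + 1) with hMdef
  set D : (Fin N → ℝ) → ℝ :=
    fun x => ((|v x| ^ (α - 1) * v x) - (|w x| ^ (α - 1) * w x)) * (v x - w x) with hDdef
  have hα1' : (0:ℝ) < α + 1 := by linarith
  have hne0 : ENNReal.ofReal (α + 1) ≠ 0 := by simp [ENNReal.ofReal_eq_zero]; linarith
  have hint_v : Integrable (fun x => |v x| ^ (α + 1)) μ := by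
    have h := hv.integrable_norm_rpow hne0 ENNReal.ofReal_ne_top
    simpa [Real.norm_eq_abs, ENNReal.toReal_ofReal hα1'.le] using h
  have hint_w : Integrable (fun x => |w x| ^ (α + 1)) μ := by
    have h := hw.integrable_norm_rpow hne0 ENNReal.ofReal_ne_top
    simpa [Real.norm_eq_abs, ENNReal.toReal_ofReal hα1'.le] using h
  have hMint : Integrable M μ := hint_v.add hint_w
  have hM0 : ∀ x, 0 ≤ M x := fun x => add_nonneg (Real.rpow_nonneg (abs_nonneg _) _)
    (Real.rpow_nonneg (abs_nonneg _) _)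
  have hD0 : ∀ x, 0 ≤ D x := by
    intro x
    have h := keyA hα0 hα1 (v x) (w x)
    have h2 : (0:ℝ) ≤ α / 2 * ((v x - w x) ^ 2 * (|v x| + |w x|) ^ (α - 1)) := by positivity
    exact le_trans h2 h
  have hDleM : ∀ x, D x ≤ 3 * M x := by
    intro x
    simp only [hDdef, hMdef]
    have hb1 : |(|v x| ^ (α - 1) * v x - |w x| ^ (α - 1) * w x)| ≤ |v x| ^ α + |w x| ^ α := by
      calc |(|v x| ^ (α - 1) * v x - |w x| ^ (α - 1) * w x)|
          ≤ |(|v x| ^ (α - 1) * v x)| + |(|w x| ^ (α - 1) * w x)| := abs_sub _ _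
        _ = |v x| ^ α + |w x| ^ α := by rw [abs_phi hα0, abs_phi hα0]
    have hb2 : |v x - w x| ≤ |v x| + |w x| := abs_sub _ _
    have h1 : (|v x| ^ (α - 1) * v x - |w x| ^ (α - 1) * w x) * (v x - w x) ≤
        (|v x| ^ α + |w x| ^ α) * (|v x| + |w x|) := by
      calc (|v x| ^ (α - 1) * v x - |w x| ^ (α - 1) * w x) * (v x - w x)
          ≤ |(|v x| ^ (α - 1) * v x - |w x| ^ (α - 1) * w x) * (v x - w x)| := le_abs_self _
        _ = |(|v x| ^ (α - 1) * v x - |w x| ^ (α - 1) * w x)| * |v x - w x| := abs_mul _ _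
        _ ≤ (|v x| ^ α + |w x| ^ α) * (|v x| + |w x|) := by
            apply mul_le_mul hb1 hb2 (abs_nonneg _) (by positivity)
    have eA := rpow_succ_self (abs_nonneg (v x)) (show α + 1 ≠ 0 by linarith)
    have eB := rpow_succ_self (abs_nonneg (w x)) (show α + 1 ≠ 0 by linarith)
    have c1 := cross_bound hα0 hα1 (abs_nonneg (v x)) (abs_nonneg (w x))
    have c2 := cross_bound hα0 hα1 (abs_nonneg (w x)) (abs_nonneg (v x))
    nlinarith [h1, eA, eB, c1, c2]
  have hva := hv.aestronglyMeasurable.aemeasurable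
  have hwa := hw.aestronglyMeasurable.aemeasurable
  have hvabs : AEMeasurable (fun x => |v x|) μ := hva.norm
  have hwabs : AEMeasurable (fun x => |w x|) μ := hwa.norm
  have hDmeas : AEStronglyMeasurable D μ := by
    exact ((((hvabs.pow aemeasurable_const).mul hva).sub
      ((hwabs.pow aemeasurable_const).mul hwa)).mul (hva.sub hwa)).aestronglyMeasurable
  have hDint : Integrable D μ := by
    apply Integrable.mono' (hMint.const_mul 3) hDmeas
    exact Filter.Eventually.of_forall fun x => by
      rw [Real.norm_eq_abs, abs_of_nonneg (hD0 x)]; exact hDleM x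
  set p : ℝ := 2 / (1 - α) with hpdef
  set q : ℝ := 2 / (α + 1) with hqdef
  have hp1 : 1 < p := by
    rw [hpdef]
    rw [lt_div_iff₀ (by linarith)]
    linarith
  have hq1 : 1 < q := by
    rw [hqdef]
    rw [lt_div_iff₀ (by linarith)]
    linarith
  have hpq : Real.HolderConjugate p q := by
    constructor
    · rw [hpdef, hqdef]
      rw [inv_div, inv_div, inv_one]
      ring
    · linarith
    · linarith
  have h1α : (1:ℝ) - α ≠ 0 := by linarith
  have h1α' : (α:ℝ) + 1 ≠ 0 := by linarith
  have hpinv : 1 / p = (1 - α) / 2 := by rw [hpdef, one_div_div]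
  have hqinv : 1 / q = (α + 1) / 2 := by rw [hqdef, one_div_div]
  set f : (Fin N → ℝ) → ℝ := fun x => M x ^ ((1 - α) / 2) with hfdef
  set g : (Fin N → ℝ) → ℝ := fun x => D x ^ ((α + 1) / 2) with hgdef
  have hf : MemLp f (ENNReal.ofReal p) μ := by
    have h := memℒp_rpow_one_div hMint hM0 hp1
    simp only [hpinv] at h
    exact h
  have hg : MemLp g (ENNReal.ofReal q) μ := by
    have h := memℒp_rpow_one_div hDint hD0 hq1
    simp only [hqinv] at h
    exact h
  have holder := integral_mul_le_Lp_mul_Lq_of_nonneg hpq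
    (Filter.Eventually.of_forall fun x => Real.rpow_nonneg (hM0 x) _)
    (Filter.Eventually.of_forall fun x => Real.rpow_nonneg (hD0 x) _) hf hg
  have ef : (fun x => f x ^ p) = M := by
    funext x
    rw [hfdef, ← Real.rpow_mul (hM0 x), show (1 - α) / 2 * p = 1 by
      rw [hpdef]; field_simp, Real.rpow_one]

  have eg : (fun x => g x ^ q) = D := by
    funext x
    rw [hgdef, ← Real.rpow_mul (hD0 x), show (α + 1) / 2 * q = 1 by
      rw [hqdef]; field_simp, Real.rpow_one]
  rw [ef, eg, hpinv, hqinv] at holder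
  have hfg_int : Integrable (fun x => C0 * (f x * g x)) μ := by
    apply Integrable.const_mul
    apply Integrable.mono' (hMint.add hDint)
      (hf.aestronglyMeasurable.mul hg.aestronglyMeasurable)
    refine Filter.Eventually.of_forall fun x => ?_
    have hMD : 0 ≤ M x + D x := add_nonneg (hM0 x) (hD0 x)
    simp only [Pi.mul_apply, Pi.add_apply, Real.norm_eq_abs]
    rw [abs_of_nonneg (mul_nonneg (Real.rpow_nonneg (hM0 x) _)
      (Real.rpow_nonneg (hD0 x) _))]
    calc f x * g x ≤ (M x + D x) ^ ((1 - α) / 2) * (M x + D x) ^ ((α + 1) / 2) := by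
          apply mul_le_mul
          · exact Real.rpow_le_rpow (hM0 x) (by linarith [hD0 x]) (by linarith)
          · exact Real.rpow_le_rpow (hD0 x) (by linarith [hM0 x]) (by linarith)
          · exact Real.rpow_nonneg (hD0 x) _
          · exact Real.rpow_nonneg hMD _
      _ = M x + D x := by
          rw [← Real.rpow_add' hMD (by rw [show (1 - α) / 2 + (α + 1) / 2 = 1 by ring]; norm_num : (1 - α) / 2 + ((α + 1) / 2) ≠ 0),
            show (1 - α) / 2 + (α + 1) / 2 = 1 by ring, Real.rpow_one]
  calc (∫ x in Ω, |v x - w x| ^ (α + 1))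
      ≤ ∫ x in Ω, C0 * (f x * g x) := by
        apply integral_mono_of_nonneg
          (Filter.Eventually.of_forall fun x => Real.rpow_nonneg (abs_nonneg _) _) hfg_int
        exact Filter.Eventually.of_forall fun x => key_pointwise hα0 hα1 (v x) (w x)
    _ = C0 * ∫ x in Ω, f x * g x := integral_const_mul _ _
    _ ≤ C0 * ((∫ x in Ω, M x) ^ ((1 - α) / 2) * (∫ x in Ω, D x) ^ ((α + 1) / 2)) :=
        mul_le_mul_of_nonneg_left holder hC0pos.le
    _ = C0 * (∫ x in Ω, M x) ^ ((1 - α) / 2) * (∫ x in Ω, D x) ^ ((α + 1) / 2) :=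
        (mul_assoc _ _ _).symm
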